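/- Let C be a component of an acyclic agreement forest F for trees T, and let σ order leaves by components following a topological order of the inheritance graph. For any leaf l_j ∈ L(C) with first leaf l_s of C, the sibling v_j of l_j in T^j lies inside the subtree of T^j spanned by the already-added leaves of C, and the nodes of that subtree are indexed identically across all trees in T. -/

import Mathlib

open scoped Classical

namespace OLA

/-- Rooted binary phylogenetic trees with `ℕ`-labeled leaves. -/
inductive BTree where
  | leaf (x : ℕ)
  | node (l r : BTree)
deriving DecidableEq

namespace BTree

def leafList : BTree → List ℕ
  | .leaf x => [x]
  | .node l r => leafList l ++ leafList r

def leafSet (t : BTree) : Finset ℕ := t.leafList.toFinset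

/-- `t` is a phylogenetic tree on the leaf set `{0, …, n-1}`. -/
def IsPhylo (t : BTree) (n : ℕ) : Prop :=
  t.leafList.Nodup ∧ t.leafSet = Finset.range n

def minLeaf : BTree → ℕ
  | .leaf x => x
  | .node l r => min (minLeaf l) (minLeaf r)

/-- OLA index of the root of a (sub)tree: leaf label, or minus the second
smallest of the minimal leaves of the two children. -/
def idx : BTree → ℤ
  | .leaf x => (x : ℤ)
  | .node l r => -(max (minLeaf l) (minLeaf r) : ℤ)

/-- Restriction `T^i` of `t` to the leaves labeled `≤ i` (suppressing
degree-2 nodes); `none` if no such leaf exists. -/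
def restrictLe : BTree → ℕ → Option BTree
  | .leaf x, i => if x ≤ i then some (.leaf x) else none
  | .node l r, i =>
    match restrictLe l i, restrictLe r i with
    | some l', some r' => some (.node l' r')
    | some l', none => some l'
    | none, some r' => some r'
    | none, none => none

/-- Restriction `T|_S` of `t` to the leaves in `S` (suppressing degree-2 nodes). -/
def restrictTo : BTree → Finset ℕ → Option BTree
  | .leaf x, S => if x ∈ S then some (.leaf x) else none
  | .node l r, S =>
    match restrictTo l S, restrictTo r S with
    | some l', some r' => some (.node l' r')
    | some l', none => some l'
    | none, some r' => some r'
    | none, none => none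

/-- OLA index of the sibling of the leaf labeled `i`, if it exists. -/
def siblingIdx : BTree → ℕ → Option ℤ
  | .leaf _, _ => none
  | .node l r, i =>
    if l = .leaf i then some r.idx
    else if r = .leaf i then some l.idx
    else (siblingIdx l i).orElse (fun _ => siblingIdx r i)

/-- The OLA vector entry of `t` at position `i ≥ 1`: the index of the sibling
of leaf `i` in the restriction of `t` to leaves `0, …, i`. -/
def olaEntry (t : BTree) (i : ℕ) : ℤ :=
  ((t.restrictLe i).bind (fun t' => t'.siblingIdx i)).getD 0

def relabel (f : ℕ → ℕ) : BTree → BTree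
  | .leaf x => .leaf (f x)
  | .node l r => .node (relabel f l) (relabel f r)

/-- The set of clusters (leaf sets of rooted subtrees) of `t`.  Two leaf-labeled
trees over the same leaf set are isomorphic iff their cluster sets coincide. -/
def clusters : BTree → Set (Set ℕ)
  | .leaf x => {{x}}
  | .node l r => insert {y | y ∈ (node l r).leafList} (clusters l ∪ clusters r)

def subtreeAt : BTree → List Bool → Option BTree
  | t, [] => some t
  | .leaf _, _ :: _ => none
  | .node l _, false :: p => subtreeAt l p
  | .node _ r, true :: p => subtreeAt r p

/-- `w` occurs as a rooted subtree (i.e. the subtree below a node) of `t`. -/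
def IsNode (t w : BTree) : Prop := ∃ p, t.subtreeAt p = some w

/-- The position of the least common ancestor of the leaves in `S`. -/
def lcaPos : BTree → Finset ℕ → List Bool
  | .leaf _, _ => []
  | .node l r, S =>
    if S ⊆ l.leafSet then false :: lcaPos l S
    else if S ⊆ r.leafSet then true :: lcaPos r S
    else []

/-- Positions of the nodes of the minimal spanning subtree `T(S)`. -/
def spanNodes (t : BTree) (S : Finset ℕ) : Set (List Bool) :=
  {p | t.lcaPos S <+: p ∧ ∃ u, t.subtreeAt p = some u ∧ ∃ x ∈ S, x ∈ u.leafList}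

end BTree

/-- OLA vector of tree `t` under the leaf ordering `σ` (leaf `x` is the
`σ x`-th leaf in the order). -/
def ola (t : BTree) (σ : Equiv.Perm ℕ) (i : ℕ) : ℤ :=
  (t.relabel σ).olaEntry i

/-- `σ` is a valid leaf ordering of the leaf set `{0, …, n-1}`. -/
def IsOrdering (σ : Equiv.Perm ℕ) (n : ℕ) : Prop := ∀ x < n, σ x < n

/-- The set of (corrected) mismatched indices among `{1, …, i}` of a family of
OLA vectors: an index is mismatched if two of the vectors differ there, or if
all vectors place that leaf above the internal node created by an
already-mismatched leaf. -/
noncomputable def mismatch {ι : Type*} (v : ι → ℕ → ℤ) : ℕ → Finset ℕ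
  | 0 => ∅
  | i + 1 =>
    let M := mismatch v i
    if (∃ a b : ι, v a (i+1) ≠ v b (i+1)) ∨ (∃ j ∈ M, ∀ a : ι, v a (i+1) = -(j : ℤ))
    then insert (i+1) M else M

/-- Corrected OLA distance of a family of OLA vectors of trees on `n` leaves. -/
noncomputable def corrDist {ι : Type*} (v : ι → ℕ → ℤ) (n : ℕ) : ℕ :=
  (mismatch v (n-1)).card

/-- Hamming OLA distance: the number of indices where at least two vectors differ. -/
noncomputable def hamDist {ι : Type*} (v : ι → ℕ → ℤ) (n : ℕ) : ℕ :=
  ((Finset.Icc 1 (n-1)).filter fun i => ∃ a b : ι, v a i ≠ v b i).card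

/-- `comp` is an agreement forest for the trees `ts` over leaf set `{0,…,n-1}`:
components have pairwise disjoint leaf sets partitioning the full leaf set,
each tree restricted to a component's leaves is isomorphic to the component,
and the spanning subtrees are node-disjoint in each tree. -/
def IsAF {ι : Type*} (ts : ι → BTree) (n : ℕ) {f : ℕ} (comp : Fin f → BTree) : Prop :=
  (∀ i, (comp i).leafList.Nodup) ∧
  (∀ i j, i ≠ j → Disjoint (comp i).leafSet (comp j).leafSet) ∧
  (Finset.univ.biUnion (fun i => (comp i).leafSet) = Finset.range n) ∧
  (∀ a i, ∃ c, (ts a).restrictTo (comp i).leafSet = some c ∧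
      c.clusters = (comp i).clusters) ∧
  (∀ a i j, i ≠ j →
      Disjoint (BTree.spanNodes (ts a) ((comp i).leafSet))
               (BTree.spanNodes (ts a) ((comp j).leafSet)))

/-- Edge of the inheritance graph: some tree has a directed path from the root
of the spanning subtree of component `i` down to that of component `j`. -/
def inhEdge {ι : Type*} (ts : ι → BTree) {f : ℕ} (comp : Fin f → BTree)
    (i j : Fin f) : Prop :=
  i ≠ j ∧ ∃ a, (BTree.lcaPos (ts a) ((comp i).leafSet)) <+:
      (BTree.lcaPos (ts a) ((comp j).leafSet))

/-- `comp` is an acyclic agreement forest for `ts`. -/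
def IsAAF {ι : Type*} (ts : ι → BTree) (n : ℕ) {f : ℕ} (comp : Fin f → BTree) : Prop :=
  IsAF ts n comp ∧ ∀ i, ¬ Relation.TransGen (inhEdge ts comp) i i

/-- Size of a maximum acyclic agreement forest (an AAF with fewest components). -/
noncomputable def maafSize {ι : Type*} (ts : ι → BTree) (n : ℕ) : ℕ :=
  sInf {f | ∃ comp : Fin f → BTree, IsAAF ts n comp}

end OLA
namespace OLA
namespace BTree

theorem leafList_ne_nil : ∀ t : BTree, t.leafList ≠ []
  | .leaf x => by simp [leafList]
  | .node l r => by
      simp [leafList]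
      exact fun h _ => leafList_ne_nil l h

theorem mem_leafSet {y : ℕ} {t : BTree} : y ∈ t.leafSet ↔ y ∈ t.leafList := by
  simp [leafSet]

theorem leafList_relabel (f : ℕ → ℕ) : ∀ t : BTree, (t.relabel f).leafList = t.leafList.map f
  | .leaf x => rfl
  | .node l r => by
      simp [relabel, leafList, leafList_relabel f l, leafList_relabel f r]

theorem minLeaf_mem : ∀ t : BTree, t.minLeaf ∈ t.leafList
  | .leaf x => by simp [minLeaf, leafList]
  | .node l r => by
      simp only [minLeaf, leafList, List.mem_append]
      rcases le_total l.minLeaf r.minLeaf with h | h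
      · rw [min_eq_left h]; exact Or.inl (minLeaf_mem l)
      · rw [min_eq_right h]; exact Or.inr (minLeaf_mem r)

theorem restrictTo_some_mem {S : Finset ℕ} :
    ∀ {t u : BTree}, t.restrictTo S = some u → ∃ y ∈ t.leafList, y ∈ S
  | .leaf x, u => by
      simp only [restrictTo, leafList]
      split <;> simp_all
  | .node l r, u => by
      rw [restrictTo]
      rcases hl : l.restrictTo S with _ | l' <;> rcases hr : r.restrictTo S with _ | r' <;>
        intro h <;> simp only [leafList, List.mem_append] <;> try cases h
      · obtain ⟨y, hy, hyS⟩ := restrictTo_some_mem hr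
        exact ⟨y, Or.inr hy, hyS⟩
      · obtain ⟨y, hy, hyS⟩ := restrictTo_some_mem hl
        exact ⟨y, Or.inl hy, hyS⟩
      · obtain ⟨y, hy, hyS⟩ := restrictTo_some_mem hl
        exact ⟨y, Or.inl hy, hyS⟩

theorem restrictTo_eq_none_iff {S : Finset ℕ} :
    ∀ {t : BTree}, t.restrictTo S = none ↔ ∀ y ∈ t.leafList, y ∉ S
  | .leaf x => by
      simp only [restrictTo, leafList]
      split <;> simp_all
  | .node l r => by
      constructor
      · intro h
        rw [restrictTo] at h
        rcases hl : l.restrictTo S with _ | l' <;> rcases hr : r.restrictTo S with _ | r' <;>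
          rw [hl, hr] at h <;> try cases h
        have h1 := (restrictTo_eq_none_iff (t := l)).1 hl
        have h2 := (restrictTo_eq_none_iff (t := r)).1 hr
        simp only [leafList, List.mem_append]
        rintro y (hy | hy) <;> [exact h1 y hy; exact h2 y hy]
      · intro h
        rw [restrictTo]
        rcases hl : l.restrictTo S with _ | l'
        · rcases hr : r.restrictTo S with _ | r'
          · rfl
          · obtain ⟨y, hy, hyS⟩ := restrictTo_some_mem hr
            exact absurd hyS (h y (by simp [leafList, hy]))
        · obtain ⟨y, hy, hyS⟩ := restrictTo_some_mem hl
          exact absurd hyS (h y (by simp [leafList, hy]))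

theorem restrictTo_leafList {S : Finset ℕ} :
    ∀ {t u : BTree}, t.restrictTo S = some u → u.leafList = t.leafList.filter (· ∈ S)
  | .leaf x, u => by
      simp only [restrictTo, leafList]
      split
      · rename_i h; intro hu; cases hu; simp [leafList, List.filter, h]
      · intro h; cases h
  | .node l r, u => by
      rw [restrictTo]
      rcases hl : l.restrictTo S with _ | l' <;> rcases hr : r.restrictTo S with _ | r' <;>
        intro h <;> simp only [Option.some.injEq] at h <;> try cases h
      · -- l none r some : u = r'
        have h1 : l.leafList.filter (· ∈ S) = [] :=
          List.filter_eq_nil_iff.2 (by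
            intro a ha
            simpa using (restrictTo_eq_none_iff).1 hl a ha)
        simp [leafList, List.filter_append, h1, restrictTo_leafList hr]
      · -- l some r none : u = l'
        have h1 : r.leafList.filter (· ∈ S) = [] :=
          List.filter_eq_nil_iff.2 (by
            intro a ha
            simpa using (restrictTo_eq_none_iff).1 hr a ha)
        simp [leafList, List.filter_append, h1, restrictTo_leafList hl]
      · -- both some
        simp only [leafList, List.filter_append]
        rw [restrictTo_leafList hl, restrictTo_leafList hr]

theorem restrictTo_of_forall_mem {S : Finset ℕ} :
    ∀ {t : BTree}, (∀ y ∈ t.leafList, y ∈ S) → t.restrictTo S = some t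
  | .leaf x => by simp [restrictTo, leafList]
  | .node l r => by
      intro h
      simp only [leafList, List.mem_append] at h
      rw [restrictTo, restrictTo_of_forall_mem (fun y hy => h y (Or.inl hy)),
        restrictTo_of_forall_mem (fun y hy => h y (Or.inr hy))]

theorem restrictLe_eq_restrictTo (i : ℕ) :
    ∀ t : BTree, t.restrictLe i = t.restrictTo (Finset.range (i+1))
  | .leaf x => by simp [restrictLe, restrictTo, Nat.lt_succ_iff]
  | .node l r => by
      rw [restrictLe, restrictTo, restrictLe_eq_restrictTo i l, restrictLe_eq_restrictTo i r]

theorem restrictTo_none_mono {S T : Finset ℕ} (hST : T ⊆ S) {t : BTree}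
    (h : t.restrictTo S = none) : t.restrictTo T = none := by
  rw [restrictTo_eq_none_iff] at h ⊢
  exact fun y hy hyT => h y hy (hST hyT)

theorem restrictTo_restrictTo (S₁ S₂ : Finset ℕ) :
    ∀ t : BTree, (t.restrictTo S₁).bind (fun u => u.restrictTo S₂) = t.restrictTo (S₁ ∩ S₂)
  | .leaf x => by
      simp only [restrictTo, Finset.mem_inter]
      by_cases h1 : x ∈ S₁ <;> by_cases h2 : x ∈ S₂ <;> simp [restrictTo, h1, h2]
  | .node l r => by
      have IHl := restrictTo_restrictTo S₁ S₂ l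
      have IHr := restrictTo_restrictTo S₁ S₂ r
      rw [restrictTo]
      rcases hl : l.restrictTo S₁ with _ | l₁ <;> rcases hr : r.restrictTo S₁ with _ | r₁ <;>
        rw [hl] at IHl <;> rw [hr] at IHr <;> simp only [Option.bind] at IHl IHr ⊢
      · rw [restrictTo, ← IHl, ← IHr]
      · rw [restrictTo, ← IHl, ← IHr]
        rcases r₁.restrictTo S₂ with _ | r₂ <;> rfl
      · rw [restrictTo, ← IHl, ← IHr]
        rcases l₁.restrictTo S₂ with _ | l₂ <;> rfl
      · rw [restrictTo, restrictTo, IHl, IHr]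

theorem restrictTo_relabel {f : ℕ → ℕ} (hf : Function.Injective f) (A : Finset ℕ) :
    ∀ t : BTree, (t.relabel f).restrictTo (A.image f) = (t.restrictTo A).map (relabel f)
  | .leaf x => by
      have : f x ∈ A.image f ↔ x ∈ A := by
        constructor
        · intro h
          obtain ⟨y, hy, hxy⟩ := Finset.mem_image.1 h
          exact hf hxy ▸ hy
        · intro h; exact Finset.mem_image_of_mem f h
      by_cases h : x ∈ A <;> simp [relabel, restrictTo, this, h]
  | .node l r => by
      rw [relabel, restrictTo, restrictTo, restrictTo_relabel hf A l, restrictTo_relabel hf A r]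
      rcases l.restrictTo A with _ | l' <;> rcases r.restrictTo A with _ | r' <;> rfl

theorem subtreeAt_leafList_sublist :
    ∀ {t u : BTree} {p : List Bool}, t.subtreeAt p = some u → u.leafList.Sublist t.leafList
  | t, u, [] => by
      intro h; rw [subtreeAt] at h; cases h; exact List.Sublist.refl _
  | .leaf x, u, b :: p => by intro h; cases h
  | .node l r, u, false :: p => by
      intro h
      rw [subtreeAt] at h
      exact (subtreeAt_leafList_sublist h).trans (List.sublist_append_left _ _)
  | .node l r, u, true :: p => by
      intro h
      rw [subtreeAt] at h
      exact (subtreeAt_leafList_sublist h).trans (List.sublist_append_right _ _)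

theorem subtreeAt_append (p q : List Bool) :
    ∀ t : BTree, t.subtreeAt (p ++ q) = (t.subtreeAt p).bind (fun u => u.subtreeAt q) := by
  induction p with
  | nil => intro t; simp [subtreeAt]
  | cons b p ih =>
      intro t
      rcases t with x | ⟨l, r⟩
      · simp [subtreeAt]
      · rcases b <;> simp only [List.cons_append, subtreeAt] <;> exact ih _

theorem subtreeAt_relabel (f : ℕ → ℕ) :
    ∀ (t : BTree) (p : List Bool), (t.relabel f).subtreeAt p = (t.subtreeAt p).map (relabel f)
  | t, [] => by simp [subtreeAt]
  | .leaf x, b :: p => by simp [relabel, subtreeAt]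
  | .node l r, false :: p => by
      rw [relabel, subtreeAt, subtreeAt, subtreeAt_relabel f l p]
  | .node l r, true :: p => by
      rw [relabel, subtreeAt, subtreeAt, subtreeAt_relabel f r p]

theorem nodup_node {l r : BTree} (h : (node l r).leafList.Nodup) :
    l.leafList.Nodup ∧ r.leafList.Nodup ∧ ∀ y ∈ l.leafList, y ∉ r.leafList := by
  rw [leafList, List.nodup_append] at h
  exact ⟨h.1, h.2.1, fun y hy hy' => h.2.2 y hy y hy' rfl⟩

theorem subtree_comparable :
    ∀ {t : BTree}, t.leafList.Nodup → ∀ {p p' : List Bool} {u u' : BTree} {x : ℕ},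
      t.subtreeAt p = some u → t.subtreeAt p' = some u' →
      x ∈ u.leafList → x ∈ u'.leafList → p <+: p' ∨ p' <+: p := by
  intro t
  induction t with
  | leaf y =>
      intro _ p p' u u' x hp hp' _ _
      rcases p with _ | ⟨b, p⟩
      · exact Or.inl List.nil_prefix
      · cases hp
  | node l r ihl ihr =>
      intro hnd p p' u u' x hp hp' hx hx'
      rcases p with _ | ⟨b, p⟩
      · exact Or.inl List.nil_prefix
      rcases p' with _ | ⟨b', p'⟩
      · exact Or.inr List.nil_prefix
      obtain ⟨hndl, hndr, hdisj⟩ := nodup_node hnd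
      rcases b <;> rcases b' <;> simp only [subtreeAt] at hp hp'
      · rcases ihl hndl hp hp' hx hx' with h | h
        · exact Or.inl (List.cons_prefix_cons.mpr ⟨rfl, h⟩)
        · exact Or.inr (List.cons_prefix_cons.mpr ⟨rfl, h⟩)
      · exact absurd ((subtreeAt_leafList_sublist hp').subset hx')
          (hdisj x ((subtreeAt_leafList_sublist hp).subset hx))
      · exact absurd ((subtreeAt_leafList_sublist hp).subset hx)
          (hdisj x ((subtreeAt_leafList_sublist hp').subset hx'))
      · rcases ihr hndr hp hp' hx hx' with h | h
        · exact Or.inl (List.cons_prefix_cons.mpr ⟨rfl, h⟩)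
        · exact Or.inr (List.cons_prefix_cons.mpr ⟨rfl, h⟩)

/-- If `U` sits at position `p` of `t` and its restriction to `B` is `u₀`, then `u₀`
occurs as a rooted subtree of the restriction of `t` to `B`. -/
theorem restrictTo_subtreeAt :
    ∀ {t U u₀ : BTree} {p : List Bool} {B : Finset ℕ}, t.subtreeAt p = some U →
      U.restrictTo B = some u₀ → ∃ v, t.restrictTo B = some v ∧ ∃ q, v.subtreeAt q = some u₀
  | t, U, u₀, [], B => by
      intro hp hU
      rw [subtreeAt, Option.some.injEq] at hp
      subst hp
      exact ⟨u₀, hU, [], by rw [subtreeAt]⟩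
  | .leaf x, U, u₀, b :: p, B => by intro hp; cases hp
  | .node l r, U, u₀, false :: p, B => by
      intro hp hU
      rw [subtreeAt] at hp
      obtain ⟨vl, hvl, q, hq⟩ := restrictTo_subtreeAt hp hU
      rw [restrictTo, hvl]
      rcases r.restrictTo B with _ | vr
      · exact ⟨vl, rfl, q, hq⟩
      · exact ⟨node vl vr, rfl, false :: q, hq⟩
  | .node l r, U, u₀, true :: p, B => by
      intro hp hU
      rw [subtreeAt] at hp
      obtain ⟨vr, hvr, q, hq⟩ := restrictTo_subtreeAt hp hU
      rw [restrictTo, hvr]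
      rcases l.restrictTo B with _ | vl
      · exact ⟨vr, rfl, q, hq⟩
      · exact ⟨node vl vr, rfl, true :: q, hq⟩

theorem lcaPos_spec : ∀ (t : BTree) (S : Finset ℕ), S ⊆ t.leafSet →
    ∃ u, t.subtreeAt (t.lcaPos S) = some u ∧ S ⊆ u.leafSet
  | .leaf x, S => fun h => ⟨.leaf x, rfl, h⟩
  | .node l r, S => by
      intro h
      rw [lcaPos]
      split
      · rename_i hS
        obtain ⟨u, hu, hSu⟩ := lcaPos_spec l S hS
        exact ⟨u, hu, hSu⟩
      · split
        · rename_i hS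
          obtain ⟨u, hu, hSu⟩ := lcaPos_spec r S hS
          exact ⟨u, hu, hSu⟩
        · exact ⟨node l r, rfl, h⟩

theorem parent_exists :
    ∀ {t : BTree} {x : ℕ}, x ∈ t.leafList → t ≠ leaf x →
      ∃ p w, t.subtreeAt p = some (node (leaf x) w) ∨ t.subtreeAt p = some (node w (leaf x))
  | .leaf y, x => by
      intro hx hne
      simp only [leafList, List.mem_singleton] at hx
      exact absurd (hx ▸ rfl) hne
  | .node l r, x => by
      intro hx _
      rw [leafList, List.mem_append] at hx
      rcases hx with hx | hx
      · by_cases hl : l = leaf x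
        · exact ⟨[], r, Or.inl (by rw [hl, subtreeAt])⟩
        · obtain ⟨p, w, hw⟩ := parent_exists hx hl
          exact ⟨false :: p, w, hw⟩
      · by_cases hr : r = leaf x
        · exact ⟨[], l, Or.inr (by rw [hr, subtreeAt])⟩
        · obtain ⟨p, w, hw⟩ := parent_exists hx hr
          exact ⟨true :: p, w, hw⟩

theorem sib_eq_none_of_not_mem :
    ∀ {t : BTree} {x : ℕ}, x ∉ t.leafList → t.siblingIdx x = none
  | .leaf y, x => fun _ => rfl
  | .node l r, x => by
      intro hx
      rw [leafList, List.mem_append] at hx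
      push_neg at hx
      have hl : l ≠ leaf x := by rintro rfl; exact hx.1 (by simp [leafList])
      have hr : r ≠ leaf x := by rintro rfl; exact hx.2 (by simp [leafList])
      rw [siblingIdx, if_neg hl, if_neg hr, sib_eq_none_of_not_mem hx.1,
        sib_eq_none_of_not_mem hx.2]
      rfl

theorem mem_of_ne_leaf {x : ℕ} {w : BTree} (h : w = leaf x) : x ∈ w.leafList := by
  rw [h]; simp [leafList]

theorem subtreeAt_leaf {y : ℕ} {u : BTree} :
    ∀ {p : List Bool}, (leaf y).subtreeAt p = some u → u = leaf y
  | [] => by intro h; rw [subtreeAt, Option.some.injEq] at h; exact h.symm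
  | b :: p => by intro h; cases h

theorem sib_of_parent :
    ∀ {t : BTree} {p : List Bool} {x : ℕ} {w : BTree}, t.leafList.Nodup →
      (t.subtreeAt p = some (node (leaf x) w) ∨ t.subtreeAt p = some (node w (leaf x))) →
      t.siblingIdx x = some w.idx := by
  intro t p
  induction p generalizing t with
  | nil =>
      intro x w hnd hp
      rcases hp with hp | hp <;> rw [subtreeAt, Option.some.injEq] at hp <;> subst hp
      · rw [siblingIdx, if_pos rfl]
      · have hw : w ≠ leaf x := by
          intro h
          obtain ⟨_, _, hdisj⟩ := nodup_node hnd
          exact hdisj x (mem_of_ne_leaf h) (by simp [leafList])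
        rw [siblingIdx, if_neg hw, if_pos rfl]
  | cons b p ih =>
      intro x w hnd hp
      rcases t with y | ⟨l, r⟩
      · rcases hp with hp | hp <;> cases hp
      obtain ⟨hndl, hndr, hdisj⟩ := nodup_node hnd
      rcases b with _ | _
      · -- subtree in l
        simp only [subtreeAt] at hp
        have hxl : x ∈ l.leafList := by
          rcases hp with h | h
          · exact (subtreeAt_leafList_sublist h).subset (by simp [leafList])
          · exact (subtreeAt_leafList_sublist h).subset (by simp [leafList])
        have hxr : x ∉ r.leafList := hdisj x hxl
        have hlne : l ≠ leaf x := by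
          rintro rfl
          rcases hp with h | h <;> cases subtreeAt_leaf h
        have hrne : r ≠ leaf x := by rintro rfl; exact hxr (by simp [leafList])
        rw [siblingIdx, if_neg hlne, if_neg hrne, ih hndl hp]
        rfl
      · -- subtree in r
        simp only [subtreeAt] at hp
        have hxr : x ∈ r.leafList := by
          rcases hp with h | h
          · exact (subtreeAt_leafList_sublist h).subset (by simp [leafList])
          · exact (subtreeAt_leafList_sublist h).subset (by simp [leafList])
        have hxl : x ∉ l.leafList := fun hm => hdisj x hm hxr
        have hrne : r ≠ leaf x := by
          rintro rfl
          rcases hp with h | h <;> cases subtreeAt_leaf h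
        have hlne : l ≠ leaf x := by rintro rfl; exact hxl (by simp [leafList])
        rw [siblingIdx, if_neg hlne, if_neg hrne, sib_eq_none_of_not_mem hxl, ih hndr hp]
        rfl

/-- Mirror equivalence: equality up to swapping children. -/
inductive Meq : BTree → BTree → Prop
  | leaf (x : ℕ) : Meq (leaf x) (leaf x)
  | node {l r l' r' : BTree} : Meq l l' → Meq r r' → Meq (node l r) (node l' r')
  | swap {l r l' r' : BTree} : Meq l r' → Meq r l' → Meq (node l r) (node l' r')

theorem Meq.mem {t₁ t₂ : BTree} (h : Meq t₁ t₂) : ∀ y, y ∈ t₁.leafList ↔ y ∈ t₂.leafList := by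
  induction h with
  | leaf x => intro y; rfl
  | node h1 h2 ih1 ih2 => intro y; simp [leafList, ih1 y, ih2 y]
  | swap h1 h2 ih1 ih2 =>
      intro y
      simp only [leafList, List.mem_append, ih1 y, ih2 y]
      exact Or.comm

theorem Meq.of_leaf {x : ℕ} {t : BTree} (h : Meq (BTree.leaf x) t) : t = BTree.leaf x := by
  cases h; rfl

theorem Meq.of_leaf' {x : ℕ} {t : BTree} (h : Meq t (BTree.leaf x)) : t = BTree.leaf x := by
  cases h; rfl

theorem Meq.minLeaf {t₁ t₂ : BTree} (h : Meq t₁ t₂) : t₁.minLeaf = t₂.minLeaf := by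
  induction h with
  | leaf x => rfl
  | node h1 h2 ih1 ih2 => rw [BTree.minLeaf, BTree.minLeaf, ih1, ih2]
  | swap h1 h2 ih1 ih2 => rw [BTree.minLeaf, BTree.minLeaf, ih1, ih2, min_comm]

theorem Meq.idx {t₁ t₂ : BTree} (h : Meq t₁ t₂) : t₁.idx = t₂.idx := by
  cases h with
  | leaf x => rfl
  | node h1 h2 => rw [BTree.idx, BTree.idx, h1.minLeaf, h2.minLeaf]
  | swap h1 h2 => rw [BTree.idx, BTree.idx, h1.minLeaf, h2.minLeaf, max_comm]

theorem Meq.relabel {t₁ t₂ : BTree} (f : ℕ → ℕ) (h : Meq t₁ t₂) :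
    Meq (t₁.relabel f) (t₂.relabel f) := by
  induction h with
  | leaf x => exact Meq.leaf (f x)
  | node h1 h2 ih1 ih2 => exact Meq.node ih1 ih2
  | swap h1 h2 ih1 ih2 => exact Meq.swap ih1 ih2

theorem Meq.restrictTo {t₁ t₂ : BTree} (S : Finset ℕ) (h : Meq t₁ t₂) :
    (t₁.restrictTo S = none ∧ t₂.restrictTo S = none) ∨
    (∃ u₁ u₂, t₁.restrictTo S = some u₁ ∧ t₂.restrictTo S = some u₂ ∧ Meq u₁ u₂) := by
  induction h with
  | leaf x =>
      by_cases hx : x ∈ S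
      · exact Or.inr ⟨_, _, by rw [BTree.restrictTo, if_pos hx],
          by rw [BTree.restrictTo, if_pos hx], Meq.leaf x⟩
      · exact Or.inl ⟨by rw [BTree.restrictTo, if_neg hx], by rw [BTree.restrictTo, if_neg hx]⟩
  | @node l r l' r' h1 h2 ih1 ih2 =>
      rw [BTree.restrictTo, BTree.restrictTo]
      rcases ih1 with ⟨e1, e1'⟩ | ⟨u1, u1', e1, e1', m1⟩ <;>
        rcases ih2 with ⟨e2, e2'⟩ | ⟨u2, u2', e2, e2', m2⟩ <;> rw [e1, e1', e2, e2']
      · exact Or.inl ⟨rfl, rfl⟩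
      · exact Or.inr ⟨u2, u2', rfl, rfl, m2⟩
      · exact Or.inr ⟨u1, u1', rfl, rfl, m1⟩
      · exact Or.inr ⟨_, _, rfl, rfl, Meq.node m1 m2⟩
  | @swap l r l' r' h1 h2 ih1 ih2 =>
      rw [BTree.restrictTo, BTree.restrictTo]
      rcases ih1 with ⟨e1, e1'⟩ | ⟨u1, u1', e1, e1', m1⟩ <;>
        rcases ih2 with ⟨e2, e2'⟩ | ⟨u2, u2', e2, e2', m2⟩ <;> rw [e1, e1', e2, e2']
      · exact Or.inl ⟨rfl, rfl⟩
      · exact Or.inr ⟨u2, u2', rfl, rfl, m2⟩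
      · exact Or.inr ⟨u1, u1', rfl, rfl, m1⟩
      · exact Or.inr ⟨_, _, rfl, rfl, Meq.swap m1 m2⟩

theorem Meq.sib {t₁ t₂ : BTree} (h : Meq t₁ t₂) (hnd : t₁.leafList.Nodup) (i : ℕ) :
    t₁.siblingIdx i = t₂.siblingIdx i := by
  induction h with
  | leaf x => rfl
  | @node l r l' r' h1 h2 ih1 ih2 =>
      obtain ⟨hndl, hndr, hdisj⟩ := nodup_node hnd
      by_cases hl : l = BTree.leaf i
      · have hl' : l' = BTree.leaf i := by subst hl; exact h1.of_leaf
        rw [siblingIdx, if_pos hl, siblingIdx, if_pos hl', h2.idx]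
      · have hl' : l' ≠ BTree.leaf i := fun he => hl (by rw [he] at h1; exact h1.of_leaf')
        by_cases hr : r = BTree.leaf i
        · have hr' : r' = BTree.leaf i := by subst hr; exact h2.of_leaf
          rw [siblingIdx, if_neg hl, if_pos hr, siblingIdx, if_neg hl', if_pos hr', h1.idx]
        · have hr' : r' ≠ BTree.leaf i := fun he => hr (by rw [he] at h2; exact h2.of_leaf')
          rw [siblingIdx, if_neg hl, if_neg hr, siblingIdx, if_neg hl', if_neg hr',
            ih1 hndl, ih2 hndr]
  | @swap l r l' r' h1 h2 ih1 ih2 =>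
      obtain ⟨hndl, hndr, hdisj⟩ := nodup_node hnd
      by_cases hl : l = BTree.leaf i
      · have hr' : r' = BTree.leaf i := by subst hl; exact h1.of_leaf
        have hil : i ∈ l.leafList := by rw [hl]; simp [leafList]
        have hl' : l' ≠ BTree.leaf i := by
          intro he
          have : r = BTree.leaf i := by rw [he] at h2; exact h2.of_leaf'
          exact hdisj i hil (by rw [this]; simp [leafList])
        rw [siblingIdx, if_pos hl, siblingIdx, if_neg hl', if_pos hr', h2.idx]
      · have hr' : r' ≠ BTree.leaf i := fun he => hl (by rw [he] at h1; exact h1.of_leaf')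
        by_cases hr : r = BTree.leaf i
        · have hl' : l' = BTree.leaf i := by subst hr; exact h2.of_leaf
          rw [siblingIdx, if_neg hl, if_pos hr, siblingIdx, if_pos hl', h1.idx]
        · have hl' : l' ≠ BTree.leaf i := fun he => hr (by rw [he] at h2; exact h2.of_leaf')
          rw [siblingIdx, if_neg hl, if_neg hr, siblingIdx, if_neg hl', if_neg hr',
            ← ih1 hndl, ← ih2 hndr]
          by_cases hil : i ∈ l.leafList
          · rw [sib_eq_none_of_not_mem (hdisj i hil)]
            rcases hs : l.siblingIdx i with _ | v <;> rfl
          · rw [sib_eq_none_of_not_mem hil]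
            rcases hs : r.siblingIdx i with _ | v <;> rfl

def leafS (t : BTree) : Set ℕ := {y | y ∈ t.leafList}

theorem leafS_node (l r : BTree) : leafS (node l r) = leafS l ∪ leafS r := by
  ext y; simp [leafS, leafList]

theorem clusters_node (l r : BTree) :
    clusters (node l r) = insert (leafS (node l r)) (clusters l ∪ clusters r) := rfl

theorem mem_clusters_sub : ∀ {t : BTree} {c : Set ℕ}, c ∈ clusters t →
    c.Nonempty ∧ c ⊆ leafS t
  | .leaf x, c => by
      intro h
      rw [clusters, Set.mem_singleton_iff] at h
      subst h
      exact ⟨⟨x, rfl⟩, by intro y hy; simpa [leafS, leafList] using hy⟩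
  | .node l r, c => by
      intro h
      rw [clusters_node, Set.mem_insert_iff, Set.mem_union] at h
      rcases h with rfl | h | h
      · have := leafList_ne_nil (node l r)
        rcases List.exists_mem_of_ne_nil _ this with ⟨y, hy⟩
        exact ⟨⟨y, hy⟩, subset_rfl⟩
      · obtain ⟨hne, hsub⟩ := mem_clusters_sub h
        exact ⟨hne, hsub.trans (by rw [leafS_node]; exact Set.subset_union_left)⟩
      · obtain ⟨hne, hsub⟩ := mem_clusters_sub h
        exact ⟨hne, hsub.trans (by rw [leafS_node]; exact Set.subset_union_right)⟩

theorem leafS_mem_clusters : ∀ t : BTree, leafS t ∈ clusters t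
  | .leaf x => by
      rw [clusters, Set.mem_singleton_iff]
      ext y; simp [leafS, leafList]
  | .node l r => by rw [clusters_node]; exact Set.mem_insert _ _

theorem leafS_nonempty (t : BTree) : (leafS t).Nonempty := by
  rcases List.exists_mem_of_ne_nil _ (leafList_ne_nil t) with ⟨y, hy⟩
  exact ⟨y, hy⟩

theorem leafS_eq_of_clusters {t₁ t₂ : BTree} (h : clusters t₁ = clusters t₂) :
    leafS t₁ = leafS t₂ := by
  apply subset_antisymm
  · exact (mem_clusters_sub (h ▸ leafS_mem_clusters t₁)).2
  · exact (mem_clusters_sub (h ▸ leafS_mem_clusters t₂)).2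

theorem cluster_cases {A B : BTree} {c : Set ℕ} (h : c ∈ clusters (node A B)) :
    c = leafS (node A B) ∨ c ∈ clusters A ∨ c ∈ clusters B := by
  rw [clusters_node, Set.mem_insert_iff, Set.mem_union] at h
  exact h

theorem disjoint_leafS {l r : BTree} (hnd : (node l r).leafList.Nodup) :
    ∀ y, y ∈ leafS l → y ∉ leafS r :=
  fun y hy hy' => (nodup_node hnd).2.2 y hy hy'

theorem rigid_key {l r l' r' : BTree}
    (hnd : (node l r).leafList.Nodup) (hnd' : (node l' r').leafList.Nodup)
    (hcl : clusters (node l r) = clusters (node l' r'))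
    (hsub : leafS l' ⊆ leafS l) :
    clusters l = clusters l' ∧ clusters r = clusters r' := by
  have hdisj := disjoint_leafS hnd
  have hdisj' := disjoint_leafS hnd'
  have hL : leafS (node l r) = leafS (node l' r') := leafS_eq_of_clusters hcl
  obtain ⟨a, ha⟩ := leafS_nonempty l
  obtain ⟨b, hb⟩ := leafS_nonempty r
  obtain ⟨a', ha'⟩ := leafS_nonempty l'
  obtain ⟨b', hb'⟩ := leafS_nonempty r'
  -- leafS r' ⊆ leafS r
  have hr'r : leafS r' ⊆ leafS r := by
    have hmem : leafS r' ∈ clusters (node l r) := by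
      rw [hcl, clusters_node]
      exact Set.mem_insert_of_mem _ (Or.inr (leafS_mem_clusters r'))
    rcases cluster_cases hmem with he | hc | hc
    · exfalso
      have : a' ∈ leafS r' := by
        rw [he, hL, leafS_node]
        exact Or.inl ha'
      exact hdisj' a' ha' this
    · exfalso
      have hsubL : leafS (node l r) ⊆ leafS l := by
        rw [hL, leafS_node]
        exact Set.union_subset hsub (mem_clusters_sub hc).2
      exact hdisj b (hsubL (by rw [leafS_node]; exact Or.inr hb)) hb
    · exact (mem_clusters_sub hc).2
  -- leafS l ⊆ leafS l'
  have hll' : leafS l ⊆ leafS l' := by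
    have hmem : leafS l ∈ clusters (node l' r') := by
      rw [← hcl, clusters_node]
      exact Set.mem_insert_of_mem _ (Or.inl (leafS_mem_clusters l))
    rcases cluster_cases hmem with he | hc | hc
    · exfalso
      have : b ∈ leafS l := by
        rw [he, ← hL, leafS_node]
        exact Or.inr hb
      exact hdisj b this hb
    · exact (mem_clusters_sub hc).2
    · exfalso
      exact hdisj a ha (hr'r ((mem_clusters_sub hc).2 ha))
  -- leafS r ⊆ leafS r'
  have hrr' : leafS r ⊆ leafS r' := by
    have hmem : leafS r ∈ clusters (node l' r') := by
      rw [← hcl, clusters_node]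
      exact Set.mem_insert_of_mem _ (Or.inr (leafS_mem_clusters r))
    rcases cluster_cases hmem with he | hc | hc
    · exfalso
      have : a ∈ leafS r := by
        rw [he, ← hL, leafS_node]
        exact Or.inl ha
      exact hdisj a ha this
    · exfalso
      exact hdisj b (hsub ((mem_clusters_sub hc).2 hb)) hb
    · exact (mem_clusters_sub hc).2
  have el : leafS l = leafS l' := subset_antisymm hll' hsub
  have er : leafS r = leafS r' := subset_antisymm hrr' hr'r
  constructor
  · ext c
    constructor
    · intro hc
      have : c ∈ clusters (node l' r') := by
        rw [← hcl, clusters_node]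
        exact Set.mem_insert_of_mem _ (Or.inl hc)
      obtain ⟨⟨z, hz⟩, hcs⟩ := mem_clusters_sub hc
      rcases cluster_cases this with he | h | h
      · exfalso
        have : b ∈ c := by rw [he, ← hL, leafS_node]; exact Or.inr hb
        exact hdisj b (hcs this) hb
      · exact h
      · exfalso
        have : z ∈ leafS r := er ▸ (mem_clusters_sub h).2 hz
        exact hdisj z (hcs hz) this
    · intro hc
      have : c ∈ clusters (node l r) := by
        rw [hcl, clusters_node]
        exact Set.mem_insert_of_mem _ (Or.inl hc)
      obtain ⟨⟨z, hz⟩, hcs⟩ := mem_clusters_sub hc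
      rcases cluster_cases this with he | h | h
      · exfalso
        have : b' ∈ c := by rw [he, hL, leafS_node]; exact Or.inr hb'
        exact hdisj' b' (hcs this) hb'
      · exact h
      · exfalso
        have : z ∈ leafS r' := er ▸ (mem_clusters_sub h).2 hz
        exact hdisj' z (hcs hz) this
  · ext c
    constructor
    · intro hc
      have : c ∈ clusters (node l' r') := by
        rw [← hcl, clusters_node]
        exact Set.mem_insert_of_mem _ (Or.inr hc)
      obtain ⟨⟨z, hz⟩, hcs⟩ := mem_clusters_sub hc
      rcases cluster_cases this with he | h | h
      · exfalso
        have : a ∈ c := by rw [he, ← hL, leafS_node]; exact Or.inl ha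
        exact hdisj a ha (hcs this)
      · exfalso
        have : z ∈ leafS l := el ▸ (mem_clusters_sub h).2 hz
        exact hdisj z this (hcs hz)
      · exact h
    · intro hc
      have : c ∈ clusters (node l r) := by
        rw [hcl, clusters_node]
        exact Set.mem_insert_of_mem _ (Or.inr hc)
      obtain ⟨⟨z, hz⟩, hcs⟩ := mem_clusters_sub hc
      rcases cluster_cases this with he | h | h
      · exfalso
        have : a' ∈ c := by rw [he, hL, leafS_node]; exact Or.inl ha'
        exact hdisj' a' ha' (hcs this)
      · exfalso
        have : z ∈ leafS l' := el ▸ (mem_clusters_sub h).2 hz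
        exact hdisj' z this (hcs hz)
      · exact h

theorem nodup_swap {l r : BTree} (hnd : (node l r).leafList.Nodup) :
    (node r l).leafList.Nodup := by
  obtain ⟨h1, h2, h3⟩ := nodup_node hnd
  rw [leafList, List.nodup_append]
  exact ⟨h2, h1, fun y hy z hz hyz => h3 z hz (hyz ▸ hy)⟩

theorem clusters_swap (l r : BTree) : clusters (node l r) = clusters (node r l) := by
  rw [clusters_node, clusters_node]
  have : leafS (node l r) = leafS (node r l) := by
    rw [leafS_node, leafS_node, Set.union_comm]
  rw [this, Set.union_comm]

theorem clusters_rigid : ∀ {t₁ t₂ : BTree}, t₁.leafList.Nodup → t₂.leafList.Nodup →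
    clusters t₁ = clusters t₂ → Meq t₁ t₂ := by
  intro t₁
  induction t₁ with
  | leaf x =>
      intro t₂ _ hnd₂ hcl
      rcases t₂ with y | ⟨l, r⟩
      · have h1 : ({x} : Set ℕ) ∈ clusters (BTree.leaf y) :=
          hcl ▸ (Set.mem_singleton ({x} : Set ℕ))
        rw [clusters, Set.mem_singleton_iff] at h1
        have hxy : x = y := Set.singleton_eq_singleton_iff.1 h1
        subst hxy
        exact Meq.leaf x
      · exfalso
        have hL : leafS (node l r) ∈ clusters (BTree.leaf x) :=
          hcl ▸ leafS_mem_clusters (node l r)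
        rw [clusters, Set.mem_singleton_iff] at hL
        obtain ⟨a, ha⟩ := leafS_nonempty l
        obtain ⟨b, hb⟩ := leafS_nonempty r
        have ha' : a ∈ leafS (node l r) := by rw [leafS_node]; exact Or.inl ha
        have hb' : b ∈ leafS (node l r) := by rw [leafS_node]; exact Or.inr hb
        rw [hL] at ha' hb'
        have : a = b := by
          rw [Set.mem_singleton_iff] at ha' hb'
          rw [ha', hb']
        exact disjoint_leafS hnd₂ a ha (this ▸ hb)
  | node l r ihl ihr =>
      intro t₂ hnd₁ hnd₂ hcl
      rcases t₂ with y | ⟨l', r'⟩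
      · exfalso
        have hL : leafS (node l r) ∈ clusters (BTree.leaf y) :=
          hcl ▸ leafS_mem_clusters (node l r)
        rw [clusters, Set.mem_singleton_iff] at hL
        obtain ⟨a, ha⟩ := leafS_nonempty l
        obtain ⟨b, hb⟩ := leafS_nonempty r
        have ha' : a ∈ leafS (node l r) := by rw [leafS_node]; exact Or.inl ha
        have hb' : b ∈ leafS (node l r) := by rw [leafS_node]; exact Or.inr hb
        rw [hL] at ha' hb'
        have : a = b := by
          rw [Set.mem_singleton_iff] at ha' hb'
          rw [ha', hb']
        exact disjoint_leafS hnd₁ a ha (this ▸ hb)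
      · -- both nodes
        obtain ⟨hndl, hndr, _⟩ := nodup_node hnd₁
        obtain ⟨hndl', hndr', _⟩ := nodup_node hnd₂
        have hL : leafS (node l r) = leafS (node l' r') := leafS_eq_of_clusters hcl
        have hmem : leafS l' ∈ clusters (node l r) := by
          rw [hcl, clusters_node]
          exact Set.mem_insert_of_mem _ (Or.inl (leafS_mem_clusters l'))
        have hne : leafS l' ≠ leafS (node l r) := by
          intro he
          obtain ⟨b', hb'⟩ := leafS_nonempty r'
          have : b' ∈ leafS l' := by
            rw [he, hL, leafS_node]
            exact Or.inr hb'
          exact disjoint_leafS hnd₂ b' this hb'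
        rcases cluster_cases hmem with he | hc | hc
        · exact absurd he hne
        · obtain ⟨hcll, hclr⟩ := rigid_key hnd₁ hnd₂ hcl (mem_clusters_sub hc).2
          exact Meq.node (ihl hndl hndl' hcll) (ihr hndr hndr' hclr)
        · obtain ⟨hclr, hcll⟩ := rigid_key (nodup_swap hnd₁) hnd₂
            ((clusters_swap r l).trans hcl) (mem_clusters_sub hc).2
          exact Meq.swap (ihl hndl hndr' hcll) (ihr hndr hndl' hclr)

end BTree
end OLA
open OLA OLA.BTree in
theorem stmt8_aux {ι : Type} [Fintype ι] [Nonempty ι] (n f : ℕ)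
    (ts : ι → BTree) (hts : ∀ a, (ts a).IsPhylo n)
    (comp : Fin f → BTree) (hF : IsAAF ts n comp)
    (σ : Equiv.Perm ℕ) (hσ : IsOrdering σ n)
    (horder : ∀ i j : Fin f, i < j →
      ∀ x ∈ (comp i).leafSet, ∀ y ∈ (comp j).leafSet, σ x < σ y)
    (htopo : ∀ i j : Fin f, inhEdge ts comp i j → i < j)
    (i : Fin f) (s : ℕ)
    (hs : s ∈ (comp i).leafSet.image σ ∧ ∀ y ∈ (comp i).leafSet, s ≤ σ y)
    (x : ℕ) (hx : x ∈ (comp i).leafSet) (hxs : σ x ≠ s) (a : ι) :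
    ∃ v₂, ((ts a).relabel σ).restrictTo
        (((comp i).leafSet.filter (fun y => σ y ≤ σ x)).image σ) = some v₂ ∧
      v₂.leafList.Nodup ∧
      ola (ts a) σ (σ x) = (v₂.siblingIdx (σ x)).getD 0 ∧
      (ola (ts a) σ (σ x) = (s : ℤ) ∨
        ((ola (ts a) σ (σ x)).natAbs ∈ (comp i).leafSet.image σ ∧
          s < (ola (ts a) σ (σ x)).natAbs ∧ (ola (ts a) σ (σ x)).natAbs < σ x)) := by
  obtain ⟨⟨hnd_c, hdisj_c, hcover, hrestr, hspan⟩, hacyc⟩ := hF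
  set S : Finset ℕ := (comp i).leafSet with hS
  set S' : Finset ℕ := S.filter (fun y => σ y ≤ σ x) with hS'
  set B' : Finset ℕ := S'.image σ with hB'
  set t : BTree := ts a with ht
  have hnd_a : t.leafList.Nodup := (hts a).1
  have hls_a : t.leafSet = Finset.range n := (hts a).2
  have hSsub_n : S ⊆ Finset.range n := by
    rw [← hcover]
    exact Finset.subset_biUnion_of_mem (fun j => (comp j).leafSet) (Finset.mem_univ i)
  have hSsub : S ⊆ t.leafSet := by rw [hls_a]; exact hSsub_n
  obtain ⟨x0, hx0S, hx0s⟩ := Finset.mem_image.1 hs.1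
  have hsx : s < σ x := lt_of_le_of_ne (hs.2 x hx) (fun h => hxs h.symm)
  have hxS' : x ∈ S' := Finset.mem_filter.2 ⟨hx, le_refl _⟩
  have hx0S' : x0 ∈ S' := Finset.mem_filter.2 ⟨hx0S, by rw [hx0s]; exact le_of_lt hsx⟩
  have hsB' : s ∈ B' := Finset.mem_image.2 ⟨x0, hx0S', hx0s⟩
  have hσxB' : σ x ∈ B' := Finset.mem_image.2 ⟨x, hxS', rfl⟩
  have hB'props : ∀ y' ∈ B', s ≤ y' ∧ y' ≤ σ x ∧ y' ∈ S.image σ := by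
    intro y' hy'
    obtain ⟨z, hz, rfl⟩ := Finset.mem_image.1 hy'
    obtain ⟨hzS, hzle⟩ := Finset.mem_filter.1 hz
    exact ⟨hs.2 z hzS, hzle, Finset.mem_image_of_mem σ hzS⟩
  -- the spanning subtree of component i
  obtain ⟨U, hU, hSU⟩ := lcaPos_spec t S hSsub
  -- Claim G: leaves of U with σ-value ≤ σ x belong to S
  have claimG : ∀ y ∈ U.leafList, σ y ≤ σ x → y ∈ S := by
    intro y hyU hyx
    have hyt : y ∈ t.leafList := (subtreeAt_leafList_sublist hU).subset hyU
    have hyn : y ∈ Finset.range n := by rw [← hls_a]; exact mem_leafSet.2 hyt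
    rw [← hcover] at hyn
    obtain ⟨j, _, hyj⟩ := Finset.mem_biUnion.1 hyn
    by_cases hij : j = i
    · rwa [hij] at hyj
    have hSjsub : (comp j).leafSet ⊆ t.leafSet := by
      rw [hls_a, ← hcover]
      exact Finset.subset_biUnion_of_mem (fun k => (comp k).leafSet) (Finset.mem_univ j)
    obtain ⟨U', hU', hSU'⟩ := lcaPos_spec t (comp j).leafSet hSjsub
    have hyU' : y ∈ U'.leafList := mem_leafSet.1 (hSU' hyj)
    have hxU : x ∈ U.leafList := mem_leafSet.1 (hSU hx)
    rcases subtree_comparable hnd_a hU hU' hyU hyU' with hpre | hpre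
    · -- inheritance edge i → j
      have hedge : inhEdge ts comp i j := ⟨fun h => hij (h.symm), a, hpre⟩
      have := horder i j (htopo i j hedge) x hx y hyj
      omega
    · -- both spanning subtrees contain the node at lcaPos t S
      exfalso
      have h1 : t.lcaPos S ∈ spanNodes t S := ⟨List.prefix_refl _, U, hU, x, hx, hxU⟩
      have h2 : t.lcaPos S ∈ spanNodes t ((comp j).leafSet) := ⟨hpre, U, hU, y, hyj, hyU⟩
      exact Set.disjoint_left.mp (hspan a i j (fun h => hij h.symm)) h1 h2
  -- pass to the relabeled tree and restrict
  set Ta : BTree := t.relabel σ with hTa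
  have hndTa : Ta.leafList.Nodup := by
    rw [hTa, leafList_relabel]
    exact hnd_a.map σ.injective
  have hxT : x ∈ t.leafList := mem_leafSet.1 (hSsub hx)
  have hx0T : x0 ∈ t.leafList := mem_leafSet.1 (hSsub hx0S)
  have hxU : x ∈ U.leafList := mem_leafSet.1 (hSU hx)
  have hx0U : x0 ∈ U.leafList := mem_leafSet.1 (hSU hx0S)
  have hUr : Ta.subtreeAt (t.lcaPos S) = some (U.relabel σ) := by
    rw [hTa, subtreeAt_relabel, hU, Option.map_some]
  -- restriction of the spanning subtree to already-placed leaves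
  rcases h0 : (U.relabel σ).restrictTo (Finset.range (σ x + 1)) with _ | u0
  · exfalso
    exact restrictTo_eq_none_iff.1 h0 (σ x)
      (by rw [leafList_relabel]; exact List.mem_map_of_mem (f := ⇑σ) hxU)
      (Finset.mem_range.2 (Nat.lt_succ_self _))
  obtain ⟨v, hv, q0, hq0⟩ := restrictTo_subtreeAt hUr h0
  have hvleaf : v.leafList = Ta.leafList.filter (· ∈ Finset.range (σ x + 1)) :=
    restrictTo_leafList hv
  have ndv : v.leafList.Nodup := by rw [hvleaf]; exact hndTa.filter _
  have hu0leaf : u0.leafList = (U.relabel σ).leafList.filter (· ∈ Finset.range (σ x + 1)) :=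
    restrictTo_leafList h0
  have hu0B' : ∀ y' ∈ u0.leafList, y' ∈ B' := by
    intro y' hy'
    rw [hu0leaf, List.mem_filter, leafList_relabel] at hy'
    obtain ⟨hy1, hy2⟩ := hy'
    obtain ⟨z, hzU, rfl⟩ := List.mem_map.1 hy1
    have hzle : σ z ≤ σ x := by
      have := of_decide_eq_true hy2
      rw [Finset.mem_range] at this
      omega
    exact Finset.mem_image_of_mem σ (Finset.mem_filter.2 ⟨claimG z hzU hzle, hzle⟩)
  have hσxu0 : σ x ∈ u0.leafList := by
    rw [hu0leaf, List.mem_filter, leafList_relabel]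
    exact ⟨List.mem_map_of_mem (f := ⇑σ) hxU, decide_eq_true
      (Finset.mem_range.2 (Nat.lt_succ_self _))⟩
  have hsu0 : s ∈ u0.leafList := by
    rw [hu0leaf, List.mem_filter, leafList_relabel]
    refine ⟨?_, decide_eq_true (Finset.mem_range.2 (by omega))⟩
    rw [← hx0s]
    exact List.mem_map_of_mem (f := ⇑σ) hx0U
  -- leaf σ x and its parent in v
  have hσxv : σ x ∈ v.leafList :=
    (subtreeAt_leafList_sublist hq0).subset hσxu0
  have hsv : s ∈ v.leafList :=
    (subtreeAt_leafList_sublist hq0).subset hsu0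
  have hvne : v ≠ BTree.leaf (σ x) := by
    intro h
    rw [h] at hsv
    simp only [leafList, List.mem_singleton] at hsv
    omega
  obtain ⟨q, w, hqw⟩ := parent_exists hσxv hvne
  obtain ⟨P, hP, hPshape⟩ : ∃ P, v.subtreeAt q = some P ∧
      (P = node (BTree.leaf (σ x)) w ∨ P = node w (BTree.leaf (σ x))) := by
    rcases hqw with h | h
    exacts [⟨_, h, Or.inl rfl⟩, ⟨_, h, Or.inr rfl⟩]
  have hσxP : σ x ∈ P.leafList := by
    rcases hPshape with rfl | rfl <;> simp [leafList]
  have ndP : P.leafList.Nodup := List.Nodup.sublist (subtreeAt_leafList_sublist hP) ndv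
  have hσxw : σ x ∉ w.leafList := by
    rcases hPshape with rfl | rfl
    · exact fun hm => (nodup_node ndP).2.2 (σ x) (by simp [leafList]) hm
    · exact fun hm => (nodup_node ndP).2.2 (σ x) hm (by simp [leafList])
  -- leaves of P lie in u0, hence in B'
  have hPu0 : ∀ y' ∈ P.leafList, y' ∈ u0.leafList := by
    rcases subtree_comparable ndv hq0 hP hσxu0 hσxP with hpre | hpre
    · obtain ⟨rest, rfl⟩ := hpre
      rw [subtreeAt_append, hq0] at hP
      exact fun y' hy' => (subtreeAt_leafList_sublist hP).subset hy'
    · obtain ⟨rest, rfl⟩ := hpre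
      rw [subtreeAt_append, hP] at hq0
      rcases rest with _ | ⟨b, rest⟩
      · rw [Option.bind] at hq0
        rw [subtreeAt] at hq0
        cases hq0
        exact fun y' hy' => hy'
      · exfalso
        rw [Option.bind] at hq0
        rcases hPshape with rfl | rfl <;> rcases b with _ | _ <;>
          simp only [subtreeAt] at hq0
        · rw [subtreeAt_leaf hq0] at hσxu0 hsu0
          simp only [leafList, List.mem_singleton] at hσxu0 hsu0
          omega
        · exact hσxw ((subtreeAt_leafList_sublist hq0).subset hσxu0)
        · exact hσxw ((subtreeAt_leafList_sublist hq0).subset hσxu0)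
        · rw [subtreeAt_leaf hq0] at hσxu0 hsu0
          simp only [leafList, List.mem_singleton] at hσxu0 hsu0
          omega
  have hPB' : ∀ y' ∈ P.leafList, y' ∈ B' := fun y' hy' => hu0B' y' (hPu0 y' hy')
  have hwB' : ∀ y' ∈ w.leafList, y' ∈ B' ∧ y' ≠ σ x := by
    intro y' hy'
    have hyP : y' ∈ P.leafList := by
      rcases hPshape with rfl | rfl <;> simp [leafList, hy']
    exact ⟨hPB' y' hyP, fun h => hσxw (h ▸ hy')⟩
  -- the OLA entry of σ x
  have hsib : v.siblingIdx (σ x) = some w.idx := sib_of_parent ndv hqw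
  have hola : ola (ts a) σ (σ x) = w.idx := by
    rw [ola, olaEntry, ← ht, ← hTa, restrictLe_eq_restrictTo, hv, Option.bind_some, hsib,
      Option.getD_some]
  -- transfer the parent into the restriction to B'
  have hPrestr : P.restrictTo B' = some P := restrictTo_of_forall_mem hPB'
  obtain ⟨v₂, hv₂, q', hq'⟩ := restrictTo_subtreeAt hP hPrestr
  have ndv₂ : v₂.leafList.Nodup := by
    rw [restrictTo_leafList hv₂]
    exact ndv.filter _
  have hsib₂ : v₂.siblingIdx (σ x) = some w.idx := by
    refine sib_of_parent (p := q') ndv₂ ?_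
    rcases hPshape with rfl | rfl
    exacts [Or.inl hq', Or.inr hq']
  -- identify restrictTo v B' with restrictTo Ta B'
  have hVB : Ta.restrictTo B' = some v₂ := by
    have hcomp := restrictTo_restrictTo (Finset.range (σ x + 1)) B' Ta
    rw [hv, Option.bind_some, hv₂] at hcomp
    have hBsub : Finset.range (σ x + 1) ∩ B' = B' := by
      apply Finset.inter_eq_right.2
      intro y' hy'
      exact Finset.mem_range.2 (by have := (hB'props y' hy').2.1; omega)
    rw [hBsub] at hcomp
    exact hcomp.symm
  refine ⟨v₂, hVB, ndv₂, by rw [hola, hsib₂, Option.getD_some], ?_⟩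
  -- arithmetic on the index of the sibling
  rw [hola]
  rcases w with j | ⟨wl, wr⟩
  · -- sibling is a leaf
    obtain ⟨hjB, hjx⟩ := hwB' j (by simp [leafList])
    obtain ⟨hsj, hjle, hjim⟩ := hB'props j hjB
    rcases eq_or_lt_of_le hsj with rfl | hsltj
    · exact Or.inl rfl
    · refine Or.inr ?_
      rw [idx, Int.natAbs_natCast]
      exact ⟨hjim, hsltj, lt_of_le_of_ne hjle hjx⟩
  · -- sibling is an internal node
    refine Or.inr ?_
    obtain ⟨ndwl, ndwr, hdisjw⟩ := nodup_node
      (by rcases hPshape with rfl | rfl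
          · exact (nodup_node ndP).2.1
          · exact (nodup_node ndP).1)
    have hm1 : wl.minLeaf ∈ (node wl wr).leafList := by
      rw [leafList, List.mem_append]; exact Or.inl (minLeaf_mem wl)
    have hm2 : wr.minLeaf ∈ (node wl wr).leafList := by
      rw [leafList, List.mem_append]; exact Or.inr (minLeaf_mem wr)
    obtain ⟨hm1B, hm1x⟩ := hwB' _ hm1
    obtain ⟨hm2B, hm2x⟩ := hwB' _ hm2
    obtain ⟨hs1, hle1, him1⟩ := hB'props _ hm1B
    obtain ⟨hs2, hle2, him2⟩ := hB'props _ hm2B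
    have hne12 : wl.minLeaf ≠ wr.minLeaf := by
      intro h
      exact hdisjw wl.minLeaf (minLeaf_mem wl) (h ▸ minLeaf_mem wr)
    rw [idx]
    simp only [← Nat.cast_max, Int.natAbs_neg, Int.natAbs_natCast]
    rcases le_total wl.minLeaf wr.minLeaf with hmm | hmm
    · rw [max_eq_right hmm]
      exact ⟨him2, by omega, lt_of_le_of_ne hle2 hm2x⟩
    · rw [max_eq_left hmm]
      exact ⟨him1, by omega, lt_of_le_of_ne hle1 hm1x⟩
open OLA.BTree in
open OLA in
/-- Lemma 1: with leaves ordered component-by-component along a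
topological order of the inheritance graph, for any non-first leaf `x` of a
component (with first leaf at position `s`), the sibling of `x` at attachment
time lies in the subtree spanned by the already-added leaves of the component:
its OLA index belongs to the index span of those leaves, and it is indexed
identically across all trees. -/
theorem stmt8 {ι : Type} [Fintype ι] [Nonempty ι] (n f : ℕ)
    (ts : ι → BTree) (hts : ∀ a, (ts a).IsPhylo n)
    (comp : Fin f → BTree) (hF : IsAAF ts n comp)
    (σ : Equiv.Perm ℕ) (hσ : IsOrdering σ n)
    (horder : ∀ i j : Fin f, i < j →
      ∀ x ∈ (comp i).leafSet, ∀ y ∈ (comp j).leafSet, σ x < σ y)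
    (htopo : ∀ i j : Fin f, inhEdge ts comp i j → i < j)
    (i : Fin f) (s : ℕ)
    (hs : s ∈ (comp i).leafSet.image σ ∧ ∀ y ∈ (comp i).leafSet, s ≤ σ y)
    (x : ℕ) (hx : x ∈ (comp i).leafSet) (hxs : σ x ≠ s) :
    (∀ a b : ι, ola (ts a) σ (σ x) = ola (ts b) σ (σ x)) ∧
    (∀ a : ι, ola (ts a) σ (σ x) ∈
      {z : ℤ | z = (s : ℤ) ∨
        (z.natAbs ∈ (comp i).leafSet.image σ ∧ s < z.natAbs ∧ z.natAbs < σ x)}) := by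
  have key := fun a => stmt8_aux n f ts hts comp hF σ hσ horder htopo i s hs x hx hxs a
  set S : Finset ℕ := (comp i).leafSet with hSdef
  set S' : Finset ℕ := S.filter (fun y => σ y ≤ σ x) with hS'def
  have hrestr := hF.1.2.2.2.1
  constructor
  · intro a b
    obtain ⟨va, hva, ndva, hea, _⟩ := key a
    obtain ⟨vb, hvb, ndvb, heb, _⟩ := key b
    -- va is the relabeling of the restriction of ts a to S'
    have hra := restrictTo_relabel σ.injective S' (ts a)
    rw [hva] at hra
    rcases h1 : (ts a).restrictTo S' with _ | wa
    · rw [h1] at hra; cases hra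
    rw [h1, Option.map_some] at hra
    have hva' : va = wa.relabel σ := by injection hra
    have hrb := restrictTo_relabel σ.injective S' (ts b)
    rw [hvb] at hrb
    rcases h2 : (ts b).restrictTo S' with _ | wb
    · rw [h2] at hrb; cases hrb
    rw [h2, Option.map_some] at hrb
    have hvb' : vb = wb.relabel σ := by injection hrb
    -- restriction through the component
    obtain ⟨ca, hca, hccl_a⟩ := hrestr a i
    obtain ⟨cb, hcb, hccl_b⟩ := hrestr b i
    have hSS' : S ∩ S' = S' := Finset.inter_eq_right.2 (Finset.filter_subset _ _)
    have hchain_a := restrictTo_restrictTo S S' (ts a)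
    rw [hca, Option.bind_some, hSS', h1] at hchain_a
    have hchain_b := restrictTo_restrictTo S S' (ts b)
    rw [hcb, Option.bind_some, hSS', h2] at hchain_b
    -- mirror equivalence of the component restrictions
    have ndca : ca.leafList.Nodup := by
      rw [restrictTo_leafList hca]; exact (hts a).1.filter _
    have ndcb : cb.leafList.Nodup := by
      rw [restrictTo_leafList hcb]; exact (hts b).1.filter _
    have mab : Meq ca cb := clusters_rigid ndca ndcb (hccl_a.trans hccl_b.symm)
    rcases mab.restrictTo S' with ⟨hn, _⟩ | ⟨u₁, u₂, he1, he2, m12⟩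
    · rw [hchain_a] at hn; cases hn
    · rw [hchain_a] at he1
      rw [hchain_b] at he2
      have hu1 : u₁ = wa := by injection he1.symm
      have hu2 : u₂ = wb := by injection he2.symm
      subst hu1 hu2
      have mvab : Meq va vb := by
        rw [hva', hvb']
        exact m12.relabel σ
      rw [hea, heb, mvab.sib ndva (σ x)]
  · intro a
    obtain ⟨_, _, _, _, hmem⟩ := key a
    simpa [Set.mem_setOf_eq] using hmem
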